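/- Let A be a commutative ring, F its total ring of fractions, and P ∈ F^{n×m} a matrix with factorization P = N D⁻¹, N, D over A, det D a nonzerodivisor. Let I be an m-element subset of {1,…,m+n} and Λ_{PI} its generalized elementary factor. Suppose λ lies in the radical of Λ_{PI} and λ is not nilpotent. Then the A_λ-module T_{P,A_λ}, generated by the rows of T = [Nᵗ, Dᵗ]ᵗ over the localization A_λ = A[1/λ], is a free A_λ-module of rank m. -/

import Mathlib

open Matrix

/-- The selection matrix `Δ_I`. -/
noncomputable def deltaMat {A : Type*} [CommRing A] (m N : ℕ) (I : Finset (Fin N))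
    (h : I.card = m) : Matrix (Fin m) (Fin N) A :=
  Matrix.of fun k j => if j = (I.orderIsoOfFin h k : Fin N) then 1 else 0

/-- The stacked matrix `T = [Nᵗ, Dᵗ]ᵗ`. -/
def stackND {A : Type*} [CommRing A] {n m : ℕ} (N : Matrix (Fin n) (Fin m) A)
    (D : Matrix (Fin m) (Fin m) A) : Matrix (Fin (n + m)) (Fin m) A :=
  Matrix.of (Fin.addCases (motive := fun _ => Fin m → A) (fun i => N i) (fun j => D j))

/-- The generalized elementary factor. -/
noncomputable def gef {A : Type*} [CommRing A] {n m : ℕ} (N : Matrix (Fin n) (Fin m) A)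
    (D : Matrix (Fin m) (Fin m) A) (I : Finset (Fin (n + m))) (h : I.card = m) : Set A :=
  {lam | ∃ K : Matrix (Fin (n + m)) (Fin m) A,
    lam • stackND N D = K * (deltaMat (A := A) m (n + m) I h * stackND N D)}

/-- if `λ` lies in the radical of the generalized elementary factor
`Λ_{PI}` and is not nilpotent, then the `A_λ`-module `T_{P,A_λ}` is free of rank `m`. -/
theorem stmt_10 {A : Type*} [CommRing A] {n m : ℕ}
    (P : Matrix (Fin n) (Fin m) (FractionRing A))
    (N : Matrix (Fin n) (Fin m) A) (D : Matrix (Fin m) (Fin m) A)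
    (hD : D.det ∈ nonZeroDivisors A)
    (hP : P * D.map (algebraMap A (FractionRing A)) = N.map (algebraMap A (FractionRing A)))
    (I : Finset (Fin (n + m))) (hI : I.card = m)
    (lam : A) (hrad : ∃ r : ℕ, lam ^ r ∈ gef N D I hI) (hnil : ¬ IsNilpotent lam) :
    Nonempty (Module.Basis (Fin m) (Localization.Away lam)
      (Submodule.span (Localization.Away lam)
        (Set.range fun i =>
          (stackND N D).map (algebraMap A (Localization.Away lam)) i))) := by
  classical
  obtain ⟨r, K, hK⟩ := hrad
  set R := Localization.Away lam
  set f : A →+* R := algebraMap A R with hf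
  set T : Matrix (Fin (n + m)) (Fin m) A := stackND N D with hT
  set S₀ : Matrix (Fin m) (Fin m) A := deltaMat (A := A) m (n + m) I hI * T with hS₀
  -- map everything to R
  set Tm : Matrix (Fin (n + m)) (Fin m) R := T.map f with hTm
  set S : Matrix (Fin m) (Fin m) R := S₀.map f with hS
  have hmap : f (lam ^ r) • Tm = K.map f * S := by
    ext i j
    have := congrArg f (congrFun (congrFun hK i) j)
    simpa [hTm, hS, hS₀, Matrix.mul_apply, Matrix.smul_apply, Matrix.map_apply, smul_eq_mul,
      map_sum, _root_.map_mul] using this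
  -- rows of S₀ are rows of T
  have hrow : ∀ k : Fin m, S₀ k = T ((I.orderIsoOfFin hI k : Fin (n+m))) := by
    intro k; funext j
    simp [hS₀, deltaMat, Matrix.mul_apply]
    rw [Finset.sum_eq_single (I.orderEmbOfFin hI k)]
    · simp
    · intro b _ hb; simp [hb]
    · simp
  have hrowS : ∀ k : Fin m, S k = Tm ((I.orderIsoOfFin hI k : Fin (n+m))) := by
    intro k; funext j; simp [hS, hTm, hrow k, Matrix.map_apply]
  -- f lam is a unit
  have hu : IsUnit (f (lam ^ r)) :=
    IsLocalization.map_units R (⟨lam ^ r, r, rfl⟩ : Submonoid.powers lam)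
  -- bottom rows give det relation
  have hbot : (lam ^ r) • D = K.submatrix (Fin.natAdd n) id * S₀ := by
    funext i j
    have := congrFun (congrFun hK (Fin.natAdd n i)) j
    simpa [hT, hS₀, stackND, Matrix.mul_apply] using this
  have hdet : (lam ^ r) ^ m * D.det = (K.submatrix (Fin.natAdd n) id).det * S₀.det := by
    have := congrArg Matrix.det hbot
    simpa [Matrix.det_smul, Matrix.det_mul] using this
  -- det S is a nonzerodivisor in R
  have hdetS : S.det ∈ nonZeroDivisors R := by
    have h1 : f D.det ∈ nonZeroDivisors R :=
      IsLocalization.nonZeroDivisors_le_comap (Submonoid.powers lam) R hD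
    have h2 : f ((lam ^ r) ^ m) ∈ nonZeroDivisors R := by
      have : IsUnit (f ((lam ^ r) ^ m)) := by
        rw [map_pow]; exact hu.pow m
      exact this.mem_nonZeroDivisors
    have h3 : f ((lam ^ r) ^ m * D.det) ∈ nonZeroDivisors R := by
      rw [_root_.map_mul]; exact mul_mem h2 h1
    rw [hdet, _root_.map_mul] at h3
    rw [mem_nonZeroDivisors_iff_right]
    intro z hz
    apply mem_nonZeroDivisors_iff_right.mp h3
    rw [mul_comm (f _), ← mul_assoc]
    have : S.det = f S₀.det := (RingHom.map_det f S₀).symm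
    rw [this] at hz
    rw [hz, zero_mul]
  -- the candidate basis vectors
  set v : Fin m → (Fin m → R) := fun k => Tm ((I.orderIsoOfFin hI k : Fin (n+m))) with hv
  have hvS : ∀ k, v k = S k := fun k => (hrowS k).symm
  -- linear independence
  have hli : LinearIndependent R v := by
    rw [Fintype.linearIndependent_iff]
    intro g hg k
    have hvm : g ᵥ* S = 0 := by
      funext j
      have := congrFun hg j
      simpa [Matrix.vecMul, dotProduct, hvS, Finset.sum_apply, Pi.smul_apply,
        smul_eq_mul] using this
    have : g ᵥ* (S * S.adjugate) = 0 := by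
      rw [← Matrix.vecMul_vecMul, hvm, Matrix.zero_vecMul]
    rw [Matrix.mul_adjugate] at this
    have hk : g k * S.det = 0 := by
      have := congrFun this k
      simpa [Matrix.vecMul, dotProduct, Matrix.smul_apply, Matrix.one_apply,
        mul_comm] using this
    exact mem_nonZeroDivisors_iff_right.mp hdetS _ hk
  -- span equality
  have hspan : Submodule.span R (Set.range fun i => Tm i) = Submodule.span R (Set.range v) := by
    apply le_antisymm
    · rw [Submodule.span_le]
      rintro _ ⟨i, rfl⟩
      have hrowi : f (lam ^ r) • Tm i = ∑ k, (K.map f) i k • S k := by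
        have := congrFun hmap i
        funext j
        have := congrFun this j
        simpa [Matrix.mul_apply, Matrix.smul_apply, Finset.sum_apply, Pi.smul_apply,
          smul_eq_mul] using this
      have hmem : f (lam ^ r) • Tm i ∈ Submodule.span R (Set.range v) := by
        rw [hrowi]
        exact Submodule.sum_mem _ fun k _ => Submodule.smul_mem _ _
          (Submodule.subset_span ⟨k, (hvS k)⟩)
      have := Submodule.smul_mem (Submodule.span R (Set.range v)) (↑hu.unit⁻¹) hmem
      rwa [smul_smul, IsUnit.val_inv_mul, one_smul] at this
    · rw [Submodule.span_le]
      rintro _ ⟨k, rfl⟩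
      exact Submodule.subset_span ⟨_, rfl⟩
  exact ⟨(Module.Basis.span hli).map (LinearEquiv.ofEq _ _ hspan.symm)⟩
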